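/- Define φ_n(x) = ₂F₁(−n/2, −(n−1)/2; n+3/2; x) and ψ_n(x) = ₃F₂(−n/2, −(n+1)/2, (n+5)/4; n+3/2, (n+1)/4; x). Then for all n ≥ 0, 3(3n+5)(3n+8)/((2n+3)(2n+5)) · x · ψ_{n+2}(x) = (3x+1)²·φ_{n+1}(x) − (x−1)²·ψ_n(x). -/

import Mathlib

open Finset

/-- The terminating hypergeometric polynomial `φ_n(x) = ₂F₁(-n/2, -(n-1)/2; n+3/2; x)`. -/
noncomputable def phiHyp (n : ℕ) (x : ℝ) : ℝ :=
  ∑ k ∈ Finset.range (n + 2),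
    ((ascPochhammer ℝ k).eval (-(n : ℝ) / 2) * (ascPochhammer ℝ k).eval (-((n : ℝ) - 1) / 2))
      / ((ascPochhammer ℝ k).eval ((n : ℝ) + 3 / 2) * (k.factorial : ℝ)) * x ^ k

/-- The terminating hypergeometric polynomial
`ψ_n(x) = ₃F₂(-n/2, -(n+1)/2, (n+5)/4; n+3/2, (n+1)/4; x)`. -/
noncomputable def psiHyp (n : ℕ) (x : ℝ) : ℝ :=
  ∑ k ∈ Finset.range (n + 2),
    ((ascPochhammer ℝ k).eval (-(n : ℝ) / 2) * (ascPochhammer ℝ k).eval (-((n : ℝ) + 1) / 2) *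
        (ascPochhammer ℝ k).eval (((n : ℝ) + 5) / 4))
      / ((ascPochhammer ℝ k).eval ((n : ℝ) + 3 / 2) *
          (ascPochhammer ℝ k).eval (((n : ℝ) + 1) / 4) * (k.factorial : ℝ)) * x ^ k

open Polynomial


lemma asc_eval_succ_left (a : ℝ) (j : ℕ) :
    (ascPochhammer ℝ (j + 1)).eval a = a * (ascPochhammer ℝ j).eval (a + 1) := by
  rw [ascPochhammer_succ_left]
  simp [eval_comp]

lemma asc_shift_one (a : ℝ) (j : ℕ) :
    (ascPochhammer ℝ j).eval (a + 1) * a = (ascPochhammer ℝ j).eval a * (a + j) := by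
  induction j with
  | zero => simp
  | succ m ih =>
      rw [ascPochhammer_succ_eval, ascPochhammer_succ_eval]
      push_cast
      linear_combination (a + 1 + m) * ih

/-- coefficient of `φ_m` -/
noncomputable def Pco (m : ℝ) (k : ℕ) : ℝ :=
  ((ascPochhammer ℝ k).eval (-m / 2) * (ascPochhammer ℝ k).eval (-(m - 1) / 2))
      / ((ascPochhammer ℝ k).eval (m + 3 / 2) * (k.factorial : ℝ))

/-- coefficient of `ψ_m` -/
noncomputable def Qco (m : ℝ) (k : ℕ) : ℝ :=
  ((ascPochhammer ℝ k).eval (-m / 2) * (ascPochhammer ℝ k).eval (-(m + 1) / 2) *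
        (ascPochhammer ℝ k).eval ((m + 5) / 4))
      / ((ascPochhammer ℝ k).eval (m + 3 / 2) *
          (ascPochhammer ℝ k).eval ((m + 1) / 4) * (k.factorial : ℝ))

set_option maxHeartbeats 4000000 in
lemma ratid (r K : ℝ) (hr : 0 ≤ r) (hK : 0 ≤ K) :
    ((K - (r + 1) / 2) * (K - (r + 1) / 2 + 1) * ((K - r / 2) * (K - r / 2 + 1)) * (r + 3 / 2))
        / ((r + 3 / 2 + K) * (r + 3 / 2 + K + 1) * (r + 3 / 2 + K + 2) * ((K + 1) * (K + 2)))
      + 6 * (((K - (r + 1) / 2) * (K - r / 2) * (r + 3 / 2))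
        / ((r + 3 / 2 + K) * (r + 3 / 2 + K + 1) * (K + 1)))
      + 9 * ((r + 3 / 2) / (r + 3 / 2 + K))
      - (((K - r / 2) * (K - r / 2 + 1) * ((K - (r + 1) / 2) * (K - (r + 1) / 2 + 1)) * ((r + 1) / 4 + K + 2))
            / ((r + 3 / 2 + K) * (r + 3 / 2 + K + 1) * ((r + 1) / 4) * ((K + 1) * (K + 2)))
          - 2 * (((K - r / 2) * (K - (r + 1) / 2) * ((r + 1) / 4 + K + 1))
            / ((r + 3 / 2 + K) * ((r + 1) / 4) * (K + 1)))
          + ((r + 1) / 4 + K) / ((r + 1) / 4))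
      = 3 * (3 * r + 5) * (3 * r + 8) / ((2 * r + 3) * (2 * r + 5)) *
        ((-(r + 2) / 2) * (-(r + 2 + 1) / 2) * ((r + 2 + 1) / 4 + K + 1) * ((r + 3 / 2) * (r + 5 / 2))
          / ((r + 3 / 2 + K) * (r + 3 / 2 + K + 1) * (r + 3 / 2 + K + 2) * ((r + 2 + 1) / 4) * (K + 1))) := by
  have h1 : (r + 3 / 2 + K) ≠ 0 := by positivity
  have h2 : (r + 3 / 2 + K + 1) ≠ 0 := by positivity
  have h3 : (r + 3 / 2 + K + 2) ≠ 0 := by positivity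
  have h4 : (K + 1) ≠ 0 := by positivity
  have h5 : (K + 2) ≠ 0 := by positivity
  have h6 : ((r + 1) / 4) ≠ 0 := by positivity
  have h7 : ((r + 2 + 1) / 4) ≠ 0 := by positivity
  have h8 : (2 * r + 3) ≠ 0 := by positivity
  have h9 : (2 * r + 5) ≠ 0 := by positivity
  field_simp
  ring

set_option maxHeartbeats 4000000 in
lemma claimC (r : ℝ) (hr : 0 ≤ r) (k : ℕ) :
    Pco (r + 1) (k + 2) + 6 * Pco (r + 1) (k + 1) + 9 * Pco (r + 1) k
      - (Qco r (k + 2) - 2 * Qco r (k + 1) + Qco r k)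
      = 3 * (3 * r + 5) * (3 * r + 8) / ((2 * r + 3) * (2 * r + 5)) * Qco (r + 2) (k + 1) := by
  have h32 : (0:ℝ) < r + 3 / 2 := by linarith
  have h52 : (0:ℝ) < r + 5 / 2 := by linarith
  have h14 : ((r + 1) / 4 : ℝ) ≠ 0 := by positivity
  have h34 : ((r + 2 + 1) / 4 : ℝ) ≠ 0 := by positivity
  have hc : (0:ℝ) < (ascPochhammer ℝ k).eval (r + 3 / 2) := ascPochhammer_pos k _ h32
  have hd : (0:ℝ) < (ascPochhammer ℝ k).eval ((r + 1) / 4) := ascPochhammer_pos k _ (by positivity)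
  have hg1 : (0:ℝ) < (ascPochhammer ℝ (k + 1)).eval ((r + 2 + 1) / 4) :=
    ascPochhammer_pos (k + 1) _ (by positivity)
  have hfp : (0:ℝ) < (k.factorial : ℝ) := by exact_mod_cast k.factorial_pos
  have hc0 := hc.ne'
  have hd0 := hd.ne'
  have hg0 := hg1.ne'
  have hf0 := hfp.ne'
  have e32 : (r + 3 / 2 : ℝ) ≠ 0 := h32.ne'
  have e52 : (r + 5 / 2 : ℝ) ≠ 0 := h52.ne'
  have eK0 : (r + 3 / 2 + (k:ℝ)) ≠ 0 := by positivity
  have eK1' : (r + 3 / 2 + (k:ℝ) + 1) ≠ 0 := by positivity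
  have eK2' : (r + 3 / 2 + (k:ℝ) + 2) ≠ 0 := by positivity
  have eK1 : ((k:ℝ) + 1) ≠ 0 := by positivity
  have eK2 : ((k:ℝ) + 2) ≠ 0 := by positivity
  have eS0 : (r + 1 + 3 / 2 + (k:ℝ)) ≠ 0 := by positivity
  have eS1 : (r + 1 + 3 / 2 + ((k:ℝ) + 1)) ≠ 0 := by positivity
  have eD0 : ((r + 1) / 4 + (k:ℝ)) ≠ 0 := by positivity
  have eD1 : ((r + 1) / 4 + ((k:ℝ) + 1)) ≠ 0 := by positivity
  have eC1 : (r + 3 / 2 + ((k:ℝ) + 1)) ≠ 0 := by positivity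
  have succ1 : ∀ a : ℝ, (ascPochhammer ℝ (k + 1)).eval a
      = (ascPochhammer ℝ k).eval a * (a + k) := fun a => ascPochhammer_succ_eval k a
  have succ2 : ∀ a : ℝ, (ascPochhammer ℝ (k + 2)).eval a
      = (ascPochhammer ℝ k).eval a * (a + k) * (a + (k + 1)) := by
    intro a
    rw [show k + 2 = (k + 1) + 1 from rfl, ascPochhammer_succ_eval, ascPochhammer_succ_eval]
    push_cast; ring
  have hM2 : (ascPochhammer ℝ (k + 1)).eval (-(r + 2) / 2)
      = (-(r + 2) / 2) * (ascPochhammer ℝ k).eval (-r / 2) := by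
    rw [asc_eval_succ_left, show (-(r + 2) / 2 + 1 : ℝ) = -r / 2 by ring]
  have hM3 : (ascPochhammer ℝ (k + 1)).eval (-(r + 2 + 1) / 2)
      = (-(r + 2 + 1) / 2) * (ascPochhammer ℝ k).eval (-(r + 1) / 2) := by
    rw [asc_eval_succ_left, show (-(r + 2 + 1) / 2 + 1 : ℝ) = -(r + 1) / 2 by ring]
  have h7q : (ascPochhammer ℝ (k + 1)).eval ((r + 2 + 5) / 4)
      = (ascPochhammer ℝ (k + 1)).eval ((r + 2 + 1) / 4) * ((r + 2 + 1) / 4 + ((k:ℝ) + 1))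
          / ((r + 2 + 1) / 4) := by
    have h := asc_shift_one ((r + 2 + 1) / 4) (k + 1)
    rw [show ((r + 2 + 1) / 4 + 1 : ℝ) = (r + 2 + 5) / 4 by ring] at h
    push_cast at h
    rw [eq_div_iff h34]
    linear_combination h
  have hC7 : (ascPochhammer ℝ (k + 1)).eval (r + 2 + 3 / 2)
      = (ascPochhammer ℝ k).eval (r + 3 / 2) * (r + 3 / 2 + (k:ℝ)) * (r + 3 / 2 + (k:ℝ) + 1)
          * (r + 3 / 2 + (k:ℝ) + 2) / ((r + 3 / 2) * (r + 5 / 2)) := by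
    have h1 := asc_eval_succ_left (r + 3 / 2) (k + 2)
    have h2 := asc_eval_succ_left (r + 3 / 2 + 1) (k + 1)
    rw [show (r + 3 / 2 + 1 + 1 : ℝ) = r + 2 + 3 / 2 by ring] at h2
    have h3 : (ascPochhammer ℝ (k + 2 + 1)).eval (r + 3 / 2)
        = (ascPochhammer ℝ k).eval (r + 3 / 2) * (r + 3 / 2 + (k:ℝ)) * (r + 3 / 2 + (k:ℝ) + 1)
            * (r + 3 / 2 + (k:ℝ) + 2) := by
      rw [ascPochhammer_succ_eval, succ2]
      push_cast; ring
    rw [eq_div_iff (by positivity : ((r + 3 / 2) * (r + 5 / 2) : ℝ) ≠ 0)]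
    linear_combination h3 - h1 - (r + 3 / 2) * h2
  have hS0 : (ascPochhammer ℝ k).eval (r + 1 + 3 / 2)
      = (ascPochhammer ℝ k).eval (r + 3 / 2) * (r + 3 / 2 + (k:ℝ)) / (r + 3 / 2) := by
    have h := asc_eval_succ_left (r + 3 / 2) k
    rw [show (r + 3 / 2 + 1 : ℝ) = r + 1 + 3 / 2 by ring] at h
    have h2 := ascPochhammer_succ_eval k (r + 3 / 2)
    rw [eq_div_iff e32]
    linear_combination h2 - h
  have h5q0 : (ascPochhammer ℝ k).eval ((r + 5) / 4)
      = (ascPochhammer ℝ k).eval ((r + 1) / 4) * ((r + 1) / 4 + (k:ℝ)) / ((r + 1) / 4) := by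
    have h := asc_shift_one ((r + 1) / 4) k
    rw [show ((r + 1) / 4 + 1 : ℝ) = (r + 5) / 4 by ring] at h
    rw [eq_div_iff h14]
    linear_combination h
  have hf1 : (((k + 1).factorial : ℕ) : ℝ) = ((k:ℝ) + 1) * (k.factorial : ℝ) := by
    rw [Nat.factorial_succ]; push_cast; ring
  have hf2 : (((k + 2).factorial : ℕ) : ℝ)
      = ((k:ℝ) + 2) * (((k:ℝ) + 1) * (k.factorial : ℝ)) := by
    rw [show k + 2 = (k + 1) + 1 from rfl, Nat.factorial_succ, Nat.factorial_succ]
    push_cast; ring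
  -- per-term closed forms
  have hP0 : Pco (r + 1) k = (ascPochhammer ℝ k).eval (-r / 2) * (ascPochhammer ℝ k).eval (-(r + 1) / 2) / ((ascPochhammer ℝ k).eval (r + 3 / 2) * (k.factorial : ℝ)) * ((r + 3 / 2) / (r + 3 / 2 + (k:ℝ))) := by
    simp only [Pco]
    rw [show (-(r + 1 - 1) / 2 : ℝ) = -r / 2 by ring, hS0]
    set a := (ascPochhammer ℝ k).eval (-r / 2) with ha
    set b := (ascPochhammer ℝ k).eval (-(r + 1) / 2) with hb
    set c := (ascPochhammer ℝ k).eval (r + 3 / 2) with hcc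
    set d := (ascPochhammer ℝ k).eval ((r + 1) / 4) with hdc
    set g := (ascPochhammer ℝ (k + 1)).eval ((r + 2 + 1) / 4) with hgc
    set f := ((k.factorial : ℕ) : ℝ) with hff
    field_simp
  have hP1 : Pco (r + 1) (k + 1)
      = (ascPochhammer ℝ k).eval (-r / 2) * (ascPochhammer ℝ k).eval (-(r + 1) / 2) / ((ascPochhammer ℝ k).eval (r + 3 / 2) * (k.factorial : ℝ)) * ((((k:ℝ) - (r + 1) / 2) * ((k:ℝ) - r / 2) * (r + 3 / 2))
          / ((r + 3 / 2 + (k:ℝ)) * (r + 3 / 2 + (k:ℝ) + 1) * ((k:ℝ) + 1))) := by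
    simp only [Pco]
    rw [show (-(r + 1 - 1) / 2 : ℝ) = -r / 2 by ring]
    rw [succ1, succ1, succ1, hS0, hf1]
    rw [show (r + 1 + 3 / 2 + (k:ℝ)) = r + 3 / 2 + (k:ℝ) + 1 by ring]
    set a := (ascPochhammer ℝ k).eval (-r / 2) with ha
    set b := (ascPochhammer ℝ k).eval (-(r + 1) / 2) with hb
    set c := (ascPochhammer ℝ k).eval (r + 3 / 2) with hcc
    set d := (ascPochhammer ℝ k).eval ((r + 1) / 4) with hdc
    set g := (ascPochhammer ℝ (k + 1)).eval ((r + 2 + 1) / 4) with hgc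
    set f := ((k.factorial : ℕ) : ℝ) with hff
    field_simp
    ring
  have hP2 : Pco (r + 1) (k + 2)
      = (ascPochhammer ℝ k).eval (-r / 2) * (ascPochhammer ℝ k).eval (-(r + 1) / 2) / ((ascPochhammer ℝ k).eval (r + 3 / 2) * (k.factorial : ℝ)) * ((((k:ℝ) - (r + 1) / 2) * ((k:ℝ) - (r + 1) / 2 + 1) * (((k:ℝ) - r / 2) * ((k:ℝ) - r / 2 + 1)) * (r + 3 / 2))
          / ((r + 3 / 2 + (k:ℝ)) * (r + 3 / 2 + (k:ℝ) + 1) * (r + 3 / 2 + (k:ℝ) + 2) * (((k:ℝ) + 1) * ((k:ℝ) + 2)))) := by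
    simp only [Pco]
    rw [show (-(r + 1 - 1) / 2 : ℝ) = -r / 2 by ring]
    rw [succ2, succ2, succ2, hS0, hf2]
    rw [show (r + 1 + 3 / 2 + (k:ℝ)) = r + 3 / 2 + (k:ℝ) + 1 by ring,
        show (r + 1 + 3 / 2 + ((k:ℝ) + 1)) = r + 3 / 2 + (k:ℝ) + 2 by ring]
    set a := (ascPochhammer ℝ k).eval (-r / 2) with ha
    set b := (ascPochhammer ℝ k).eval (-(r + 1) / 2) with hb
    set c := (ascPochhammer ℝ k).eval (r + 3 / 2) with hcc
    set d := (ascPochhammer ℝ k).eval ((r + 1) / 4) with hdc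
    set g := (ascPochhammer ℝ (k + 1)).eval ((r + 2 + 1) / 4) with hgc
    set f := ((k.factorial : ℕ) : ℝ) with hff
    field_simp
    ring
  have hQ0 : Qco r k = (ascPochhammer ℝ k).eval (-r / 2) * (ascPochhammer ℝ k).eval (-(r + 1) / 2) / ((ascPochhammer ℝ k).eval (r + 3 / 2) * (k.factorial : ℝ)) * (((r + 1) / 4 + (k:ℝ)) / ((r + 1) / 4)) := by
    simp only [Qco]
    rw [h5q0]
    set a := (ascPochhammer ℝ k).eval (-r / 2) with ha
    set b := (ascPochhammer ℝ k).eval (-(r + 1) / 2) with hb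
    set c := (ascPochhammer ℝ k).eval (r + 3 / 2) with hcc
    set d := (ascPochhammer ℝ k).eval ((r + 1) / 4) with hdc
    set g := (ascPochhammer ℝ (k + 1)).eval ((r + 2 + 1) / 4) with hgc
    set f := ((k.factorial : ℕ) : ℝ) with hff
    field_simp
  have hQ1 : Qco r (k + 1)
      = (ascPochhammer ℝ k).eval (-r / 2) * (ascPochhammer ℝ k).eval (-(r + 1) / 2) / ((ascPochhammer ℝ k).eval (r + 3 / 2) * (k.factorial : ℝ)) * ((((k:ℝ) - r / 2) * ((k:ℝ) - (r + 1) / 2) * ((r + 1) / 4 + (k:ℝ) + 1))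
          / ((r + 3 / 2 + (k:ℝ)) * ((r + 1) / 4) * ((k:ℝ) + 1))) := by
    simp only [Qco]
    rw [succ1, succ1, succ1, succ1, succ1, h5q0, hf1]
    set a := (ascPochhammer ℝ k).eval (-r / 2) with ha
    set b := (ascPochhammer ℝ k).eval (-(r + 1) / 2) with hb
    set c := (ascPochhammer ℝ k).eval (r + 3 / 2) with hcc
    set d := (ascPochhammer ℝ k).eval ((r + 1) / 4) with hdc
    set g := (ascPochhammer ℝ (k + 1)).eval ((r + 2 + 1) / 4) with hgc
    set f := ((k.factorial : ℕ) : ℝ) with hff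
    field_simp
    ring
  have hQ2 : Qco r (k + 2)
      = (ascPochhammer ℝ k).eval (-r / 2) * (ascPochhammer ℝ k).eval (-(r + 1) / 2) / ((ascPochhammer ℝ k).eval (r + 3 / 2) * (k.factorial : ℝ)) * ((((k:ℝ) - r / 2) * ((k:ℝ) - r / 2 + 1) * (((k:ℝ) - (r + 1) / 2) * ((k:ℝ) - (r + 1) / 2 + 1)) * ((r + 1) / 4 + (k:ℝ) + 2))
          / ((r + 3 / 2 + (k:ℝ)) * (r + 3 / 2 + (k:ℝ) + 1) * ((r + 1) / 4) * (((k:ℝ) + 1) * ((k:ℝ) + 2)))) := by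
    simp only [Qco]
    rw [succ2, succ2, succ2, succ2, succ2, h5q0, hf2]
    rw [show (r + 3 / 2 + ((k:ℝ) + 1)) = r + 3 / 2 + (k:ℝ) + 1 by ring]
    set a := (ascPochhammer ℝ k).eval (-r / 2) with ha
    set b := (ascPochhammer ℝ k).eval (-(r + 1) / 2) with hb
    set c := (ascPochhammer ℝ k).eval (r + 3 / 2) with hcc
    set d := (ascPochhammer ℝ k).eval ((r + 1) / 4) with hdc
    set g := (ascPochhammer ℝ (k + 1)).eval ((r + 2 + 1) / 4) with hgc
    set f := ((k.factorial : ℕ) : ℝ) with hff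
    field_simp
    ring
  have hU1 : Qco (r + 2) (k + 1)
      = (ascPochhammer ℝ k).eval (-r / 2) * (ascPochhammer ℝ k).eval (-(r + 1) / 2) / ((ascPochhammer ℝ k).eval (r + 3 / 2) * (k.factorial : ℝ)) * ((-(r + 2) / 2) * (-(r + 2 + 1) / 2) * ((r + 2 + 1) / 4 + (k:ℝ) + 1) * ((r + 3 / 2) * (r + 5 / 2))
          / ((r + 3 / 2 + (k:ℝ)) * (r + 3 / 2 + (k:ℝ) + 1) * (r + 3 / 2 + (k:ℝ) + 2) * ((r + 2 + 1) / 4) * ((k:ℝ) + 1))) := by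
    simp only [Qco]
    rw [hM2, hM3, h7q, hC7, hf1]
    set a := (ascPochhammer ℝ k).eval (-r / 2) with ha
    set b := (ascPochhammer ℝ k).eval (-(r + 1) / 2) with hb
    set c := (ascPochhammer ℝ k).eval (r + 3 / 2) with hcc
    set d := (ascPochhammer ℝ k).eval ((r + 1) / 4) with hdc
    set g := (ascPochhammer ℝ (k + 1)).eval ((r + 2 + 1) / 4) with hgc
    set f := ((k.factorial : ℕ) : ℝ) with hff
    field_simp
    ring
  rw [hP2, hP1, hP0, hQ2, hQ1, hQ0, hU1]
  linear_combination ((ascPochhammer ℝ k).eval (-r / 2) * (ascPochhammer ℝ k).eval (-(r + 1) / 2) / ((ascPochhammer ℝ k).eval (r + 3 / 2) * (k.factorial : ℝ))) * ratid r (k:ℝ) hr (Nat.cast_nonneg k)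

lemma asc_eval_neg_nat (t : ℕ) : ∀ k, t < k → (ascPochhammer ℝ k).eval (-(t : ℝ)) = 0 := by
  intro k
  induction k with
  | zero => intro h; exact absurd h (Nat.not_lt_zero t)
  | succ m ih =>
      intro h
      rw [ascPochhammer_succ_eval]
      rcases Nat.lt_or_ge t m with h' | h'
      · rw [ih h', zero_mul]
      · have ht : t = m := le_antisymm (Nat.lt_succ_iff.mp h) h'
        subst ht
        simp

lemma Pco_vanish (m k : ℕ) (h : m + 2 ≤ k) : Pco ((m : ℝ) + 1) k = 0 := by
  simp only [Pco]
  rcases Nat.even_or_odd m with ⟨t, ht⟩ | ⟨t, ht⟩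
  · -- m = 2t : second numerator arg -(m+1-1)/2 = -m/2 = -t
    have h2 : (-(((m:ℝ) + 1) - 1) / 2) = -(t : ℝ) := by
      subst ht; push_cast; ring
    rw [h2, asc_eval_neg_nat t k (by omega)]
    simp
  · -- m = 2t+1 : first arg -(m+1)/2 = -(t+1)
    have h2 : (-((m:ℝ) + 1) / 2) = -((t + 1 : ℕ) : ℝ) := by
      subst ht; push_cast; ring
    rw [h2, asc_eval_neg_nat (t + 1) k (by omega)]
    simp

lemma Qco_vanish (m k : ℕ) (h : m + 2 ≤ k) : Qco (m : ℝ) k = 0 := by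
  simp only [Qco]
  rcases Nat.even_or_odd m with ⟨t, ht⟩ | ⟨t, ht⟩
  · have h2 : (-(m:ℝ) / 2) = -(t : ℝ) := by subst ht; push_cast; ring
    rw [h2, asc_eval_neg_nat t k (by omega)]
    simp
  · have h2 : (-((m:ℝ) + 1) / 2) = -((t + 1 : ℕ) : ℝ) := by subst ht; push_cast; ring
    rw [h2, asc_eval_neg_nat (t + 1) k (by omega)]
    simp

lemma claimC0a (r : ℝ) : Pco (r + 1) 0 - Qco r 0 = 0 := by
  simp [Pco, Qco]

lemma claimC0b (r : ℝ) (hr : 0 ≤ r) :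
    Pco (r + 1) 1 - Qco r 1 + 6 * Pco (r + 1) 0 + 2 * Qco r 0
      = 3 * (3 * r + 5) * (3 * r + 8) / ((2 * r + 3) * (2 * r + 5)) * Qco (r + 2) 0 := by
  have e1 : (r + 1 + 3 / 2 : ℝ) ≠ 0 := by positivity
  have e2 : (r + 3 / 2 : ℝ) ≠ 0 := by positivity
  have e3 : ((r + 1) / 4 : ℝ) ≠ 0 := by positivity
  have e4 : (2 * r + 3 : ℝ) ≠ 0 := by positivity
  have e5 : (2 * r + 5 : ℝ) ≠ 0 := by positivity
  simp [Pco, Qco, ascPochhammer_one]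
  field_simp
  ring

/-- The contiguous relation `3(3n+5)(3n+8)/((2n+3)(2n+5)) x ψ_{n+2}(x)
= (3x+1)² φ_{n+1}(x) - (x-1)² ψ_n(x)`. -/
theorem psi_phi_relation (n : ℕ) (x : ℝ) :
    3 * (3 * (n : ℝ) + 5) * (3 * (n : ℝ) + 8) / ((2 * (n : ℝ) + 3) * (2 * (n : ℝ) + 5)) *
        x * psiHyp (n + 2) x
      = (3 * x + 1) ^ 2 * phiHyp (n + 1) x - (x - 1) ^ 2 * psiHyp n x := by
  have hr : (0:ℝ) ≤ (n : ℝ) := Nat.cast_nonneg n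
  have hcast1 : (((n + 1 : ℕ)) : ℝ) = (n : ℝ) + 1 := by push_cast; ring
  have hcast2 : (((n + 2 : ℕ)) : ℝ) = (n : ℝ) + 2 := by push_cast; ring
  have hphi : phiHyp (n + 1) x = ∑ k ∈ Finset.range (n + 6), Pco ((n : ℝ) + 1) k * x ^ k := by
    have h0 : phiHyp (n + 1) x = ∑ k ∈ Finset.range (n + 3), Pco (((n + 1 : ℕ)) : ℝ) k * x ^ k := rfl
    rw [h0, hcast1]
    refine Finset.sum_subset (Finset.range_subset_range.mpr (by omega)) ?_
    intro k hk hnk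
    simp only [Finset.mem_range] at hk hnk
    rw [Pco_vanish n k (by omega), zero_mul]
  have hpsin : psiHyp n x = ∑ k ∈ Finset.range (n + 6), Qco (n : ℝ) k * x ^ k := by
    have h0 : psiHyp n x = ∑ k ∈ Finset.range (n + 2), Qco ((n : ℕ) : ℝ) k * x ^ k := rfl
    rw [h0]
    refine Finset.sum_subset (Finset.range_subset_range.mpr (by omega)) ?_
    intro k hk hnk
    simp only [Finset.mem_range] at hk hnk
    rw [Qco_vanish n k (by omega), zero_mul]
  have hpsi2 : psiHyp (n + 2) x = ∑ k ∈ Finset.range (n + 6), Qco ((n : ℝ) + 2) k * x ^ k := by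
    have h0 : psiHyp (n + 2) x = ∑ k ∈ Finset.range (n + 4), Qco (((n + 2 : ℕ)) : ℝ) k * x ^ k := rfl
    rw [h0, hcast2]
    refine Finset.sum_subset (Finset.range_subset_range.mpr (by omega)) ?_
    intro k hk hnk
    simp only [Finset.mem_range] at hk hnk
    have hv := Qco_vanish (n + 2) k (by omega)
    rw [hcast2] at hv
    rw [hv, zero_mul]
  have hP4 : Pco ((n : ℝ) + 1) (n + 4) = 0 := Pco_vanish n (n + 4) (by omega)
  have hP5 : Pco ((n : ℝ) + 1) (n + 5) = 0 := Pco_vanish n (n + 5) (by omega)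
  have hT4 : Qco (n : ℝ) (n + 4) = 0 := Qco_vanish n (n + 4) (by omega)
  have hT5 : Qco (n : ℝ) (n + 5) = 0 := Qco_vanish n (n + 5) (by omega)
  have hU5 : Qco ((n : ℝ) + 2) (n + 5) = 0 := by
    have hv := Qco_vanish (n + 2) (n + 5) (by omega)
    rwa [hcast2] at hv
  -- generic reindexing lemmas
  have A1 : ∀ g : ℕ → ℝ, ∑ k ∈ Finset.range (n + 6), g k
      = g 0 + g 1 + ∑ k ∈ Finset.range (n + 4), g (k + 2) := by
    intro g
    rw [show n + 6 = (n + 5) + 1 from rfl, Finset.sum_range_succ']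
    rw [show n + 5 = (n + 4) + 1 from rfl, Finset.sum_range_succ' (fun k => g (k + 1))]
    rw [Finset.sum_congr rfl (fun k (_ : k ∈ Finset.range (n + 4)) =>
      congrArg g (show k + 1 + 1 = k + 2 by omega))]
    simp only [Nat.zero_add]
    ring
  have A2 : ∀ g : ℕ → ℝ, ∑ k ∈ Finset.range (n + 6), g k
      = g 0 + g (n + 5) + ∑ k ∈ Finset.range (n + 4), g (k + 1) := by
    intro g
    rw [show n + 6 = ((n + 4) + 1) + 1 from rfl, Finset.sum_range_succ, Finset.sum_range_succ']
    try simp only [show (n + 4) + 1 = n + 5 by omega]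
    ring
  have A3 : ∀ g : ℕ → ℝ, ∑ k ∈ Finset.range (n + 6), g k
      = g (n + 4) + g (n + 5) + ∑ k ∈ Finset.range (n + 4), g k := by
    intro g
    rw [show n + 6 = ((n + 4) + 1) + 1 from rfl, Finset.sum_range_succ, Finset.sum_range_succ]
    try simp only [show (n + 4) + 1 = n + 5 by omega]
    ring
  rw [hphi, hpsin, hpsi2, Finset.mul_sum, Finset.mul_sum, Finset.mul_sum]
  -- split RHS1
  have e1 : ∑ k ∈ Finset.range (n + 6), (3 * x + 1) ^ 2 * (Pco ((n : ℝ) + 1) k * x ^ k)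
      = (∑ k ∈ Finset.range (n + 6), Pco ((n : ℝ) + 1) k * x ^ k)
        + (∑ k ∈ Finset.range (n + 6), 6 * Pco ((n : ℝ) + 1) k * x ^ (k + 1))
        + (∑ k ∈ Finset.range (n + 6), 9 * Pco ((n : ℝ) + 1) k * x ^ (k + 2)) := by
    rw [← Finset.sum_add_distrib, ← Finset.sum_add_distrib]
    exact Finset.sum_congr rfl fun k _ => by ring
  have e2 : ∑ k ∈ Finset.range (n + 6), (x - 1) ^ 2 * (Qco (n : ℝ) k * x ^ k)
      = (∑ k ∈ Finset.range (n + 6), Qco (n : ℝ) k * x ^ k)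
        + (∑ k ∈ Finset.range (n + 6), (-2) * Qco (n : ℝ) k * x ^ (k + 1))
        + (∑ k ∈ Finset.range (n + 6), Qco (n : ℝ) k * x ^ (k + 2)) := by
    rw [← Finset.sum_add_distrib, ← Finset.sum_add_distrib]
    exact Finset.sum_congr rfl fun k _ => by ring
  have e3 : ∑ k ∈ Finset.range (n + 6),
        3 * (3 * (n : ℝ) + 5) * (3 * (n : ℝ) + 8) / ((2 * (n : ℝ) + 3) * (2 * (n : ℝ) + 5)) * x
          * (Qco ((n : ℝ) + 2) k * x ^ k)
      = ∑ k ∈ Finset.range (n + 6),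
          3 * (3 * (n : ℝ) + 5) * (3 * (n : ℝ) + 8) / ((2 * (n : ℝ) + 3) * (2 * (n : ℝ) + 5))
            * Qco ((n : ℝ) + 2) k * x ^ (k + 1) :=
    Finset.sum_congr rfl fun k _ => by ring
  rw [e1, e2, e3]
  rw [A1 (fun k => Pco ((n : ℝ) + 1) k * x ^ k),
      A2 (fun k => 6 * Pco ((n : ℝ) + 1) k * x ^ (k + 1)),
      A3 (fun k => 9 * Pco ((n : ℝ) + 1) k * x ^ (k + 2)),
      A1 (fun k => Qco (n : ℝ) k * x ^ k),
      A2 (fun k => (-2) * Qco (n : ℝ) k * x ^ (k + 1)),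
      A3 (fun k => Qco (n : ℝ) k * x ^ (k + 2)),
      A2 (fun k => 3 * (3 * (n : ℝ) + 5) * (3 * (n : ℝ) + 8) / ((2 * (n : ℝ) + 3) * (2 * (n : ℝ) + 5))
            * Qco ((n : ℝ) + 2) k * x ^ (k + 1))]
  simp only [hP4, hP5, hT4, hT5, hU5]
  have hsum : ∑ k ∈ Finset.range (n + 4),
        3 * (3 * (n : ℝ) + 5) * (3 * (n : ℝ) + 8) / ((2 * (n : ℝ) + 3) * (2 * (n : ℝ) + 5))
          * Qco ((n : ℝ) + 2) (k + 1) * x ^ (k + 1 + 1)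
      = (∑ k ∈ Finset.range (n + 4), Pco ((n : ℝ) + 1) (k + 2) * x ^ (k + 2))
        + (∑ k ∈ Finset.range (n + 4), 6 * Pco ((n : ℝ) + 1) (k + 1) * x ^ (k + 1 + 1))
        + (∑ k ∈ Finset.range (n + 4), 9 * Pco ((n : ℝ) + 1) k * x ^ (k + 2))
        - ((∑ k ∈ Finset.range (n + 4), Qco (n : ℝ) (k + 2) * x ^ (k + 2))
          + (∑ k ∈ Finset.range (n + 4), (-2) * Qco (n : ℝ) (k + 1) * x ^ (k + 1 + 1))
          + (∑ k ∈ Finset.range (n + 4), Qco (n : ℝ) k * x ^ (k + 2))) := by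
    rw [← Finset.sum_add_distrib, ← Finset.sum_add_distrib,
        ← Finset.sum_add_distrib, ← Finset.sum_add_distrib, ← Finset.sum_sub_distrib]
    refine Finset.sum_congr rfl fun k _ => ?_
    have h := claimC (n : ℝ) hr k
    linear_combination (-(x ^ (k + 2))) * h
  have h0a := claimC0a (n : ℝ)
  have h0b := claimC0b (n : ℝ) hr
  linear_combination hsum - x * h0b - h0a
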